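/- Let m, n be coprime positive integers, γ an (m,n)-Dyck path, γ* the rugged (m+n,n)-Dyck path obtained by inserting a horizontal step after each vertical step, and ι: O(γ) → O(γ*) the induced injection on step-pairs. Then Σ_{p ∈ V(γ*)} k₁(p) = |H₁(γ*) \ ι(O(γ))|, where for an outer vertex p of γ*, k₁(p) is the number of vertical steps occurring after p in γ* intersected by the line of slope n/(m+n) through p, and H₁(γ*) is the set of pairs (r_h, r_v) ∈ O(γ*) such that the line of slope n/(m+n) through the left endpoint of r_h intersects r_v. -/

import Mathlib

open scoped Classical
open Finset

/-- A lattice path is encoded as a list of steps: `false` = horizontal step `(1,0)`,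
`true` = vertical step `(0,1)`.  `IsDyck m n w` says `w` is an `(m,n)`-Dyck path:
it has `m` horizontal and `n` vertical steps and every intermediate lattice point
`(x,y)` satisfies `n*x ≤ m*y` (the path stays weakly above the diagonal `y=(n/m)x`). -/
def IsDyck (m n : ℕ) (w : List Bool) : Prop :=
  w.count false = m ∧ w.count true = n ∧
    ∀ p ∈ w.inits, n * p.count false ≤ m * p.count true

/-- `x`-coordinate of the point of the path reached after the first `i` steps. -/
def ptX (w : List Bool) (i : ℕ) : ℤ := ((w.take i).count false : ℤ)

/-- `y`-coordinate of the point of the path reached after the first `i` steps. -/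
def ptY (w : List Bool) (i : ℕ) : ℤ := ((w.take i).count true : ℤ)

/-- `O(γ)`: pairs `(i,j)` of a horizontal step `i` and a vertical step `j`
appearing later in the path. -/
def Opairs (w : List Bool) : Finset (ℕ × ℕ) :=
  (Finset.range w.length ×ˢ Finset.range w.length).filter
    (fun ij => ij.1 < ij.2 ∧ w[ij.1]? = some false ∧ w[ij.2]? = some true)

/-- The set of (bottom-left corners of) complete unit lattice squares lying between the
path and the diagonal `y = (n/m)x`: the square `[x,x+1]×[y,y+1]` lies weakly above the
diagonal and strictly below the path. -/
noncomputable def areaSet (m n : ℕ) (w : List Bool) : Finset (ℕ × ℕ) :=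
  ((Finset.range m) ×ˢ (Finset.range n)).filter (fun xy =>
    n * (xy.1 + 1) ≤ m * xy.2 ∧
    ∃ i < w.length, w[i]? = some false ∧
      (w.take (i+1)).count false = xy.1 + 1 ∧ xy.2 + 1 ≤ (w.take (i+1)).count true)

/-- `area(γ)`: the number of complete unit lattice squares between the path and the
diagonal. -/
noncomputable def area (m n : ℕ) (w : List Bool) : ℕ := (areaSet m n w).card

/-- Some line of slope `n/m` (i.e. `{(x,y) | n*x - m*y = c}`) meets both the closed
horizontal step segment `i` and the closed vertical step segment `j`. -/
def MeetsBoth (m n : ℕ) (w : List Bool) (i j : ℕ) : Prop :=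
  ∃ c : ℝ,
    (∃ x : ℝ, (ptX w i : ℝ) ≤ x ∧ x ≤ (ptX w i : ℝ) + 1 ∧
      (n : ℝ) * x - (m : ℝ) * (ptY w i : ℝ) = c) ∧
    (∃ y : ℝ, (ptY w j : ℝ) ≤ y ∧ y ≤ (ptY w j : ℝ) + 1 ∧
      (n : ℝ) * (ptX w j : ℝ) - (m : ℝ) * y = c)

/-- Condition (1A): the line of slope `n/m` through the left endpoint `(a-1,b)` of the
horizontal step `i` meets the closed vertical step segment `j`. -/
def Cond1A (m n : ℕ) (w : List Bool) (i j : ℕ) : Prop :=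
  ∃ y : ℝ, (ptY w j : ℝ) ≤ y ∧ y ≤ (ptY w j : ℝ) + 1 ∧
    (n : ℝ) * ((ptX w j : ℝ) - (ptX w i : ℝ)) = (m : ℝ) * (y - (ptY w i : ℝ))

/-- Condition (2A): the line of slope `n/m` through the top endpoint `(a',b'+1)` of the
vertical step `j` meets the closed horizontal step segment `i`. -/
def Cond2A (m n : ℕ) (w : List Bool) (i j : ℕ) : Prop :=
  ∃ x : ℝ, (ptX w i : ℝ) ≤ x ∧ x ≤ (ptX w i : ℝ) + 1 ∧
    (n : ℝ) * (x - (ptX w j : ℝ)) = (m : ℝ) * ((ptY w i : ℝ) - ((ptY w j : ℝ) + 1))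

/-- `H(γ)`: pairs in `O(γ)` admitting a common transversal line parallel to the
diagonal. -/
noncomputable def Hpairs (m n : ℕ) (w : List Bool) : Finset (ℕ × ℕ) :=
  (Opairs w).filter (fun ij => MeetsBoth m n w ij.1 ij.2)

/-- `H₁(γ)`: pairs in `O(γ)` satisfying condition (1A). -/
noncomputable def H1pairs (m n : ℕ) (w : List Bool) : Finset (ℕ × ℕ) :=
  (Opairs w).filter (fun ij => Cond1A m n w ij.1 ij.2)

/-- `H₂(γ)`: pairs in `O(γ)` satisfying condition (2A). -/
noncomputable def H2pairs (m n : ℕ) (w : List Bool) : Finset (ℕ × ℕ) :=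
  (Opairs w).filter (fun ij => Cond2A m n w ij.1 ij.2)

/-- The line of slope `n/m` through the point `(px,py)` meets the closed segment of the
horizontal step `i`. -/
def lineHitsH (m n : ℕ) (w : List Bool) (px py : ℤ) (i : ℕ) : Prop :=
  w[i]? = some false ∧
    ∃ x : ℝ, (ptX w i : ℝ) ≤ x ∧ x ≤ (ptX w i : ℝ) + 1 ∧
      (n : ℝ) * (x - (px : ℝ)) = (m : ℝ) * ((ptY w i : ℝ) - (py : ℝ))

/-- The line of slope `n/m` through the point `(px,py)` meets the closed segment of the
vertical step `j`. -/
def lineHitsV (m n : ℕ) (w : List Bool) (px py : ℤ) (j : ℕ) : Prop :=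
  w[j]? = some true ∧
    ∃ y : ℝ, (ptY w j : ℝ) ≤ y ∧ y ≤ (ptY w j : ℝ) + 1 ∧
      (n : ℝ) * ((ptX w j : ℝ) - (px : ℝ)) = (m : ℝ) * (y - (py : ℝ))

/-- Outer vertices of the path, encoded by the index `j` of a vertical step that is
immediately followed by a horizontal step; the vertex itself is the point
`(ptX w (j+1), ptY w (j+1))`. -/
def outerIdx (w : List Bool) : Finset ℕ :=
  (Finset.range w.length).filter
    (fun j => w[j]? = some true ∧ w[j+1]? = some false)

/-- The perpendicular distance from the diagonal of the outer vertex indexed by `j`,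
measured by `m*y - n*x` (proportional to the true distance). -/
def diagDist (m n : ℕ) (w : List Bool) (j : ℕ) : ℤ :=
  (m : ℤ) * ptY w (j+1) - (n : ℤ) * ptX w (j+1)

/-- `V(γ)`: outer vertices other than one farthest from the diagonal. -/
def Vset (m n : ℕ) (w : List Bool) : Finset ℕ :=
  (outerIdx w).filter (fun j => ∃ j' ∈ outerIdx w, diagDist m n w j < diagDist m n w j')

/-- `k(p)`: the number of horizontal steps of the path, other than the horizontal step
starting at the outer vertex `p` (indexed by `j`), met by the line of slope `n/m`
through `p`. -/
noncomputable def kH (m n : ℕ) (w : List Bool) (j : ℕ) : ℕ :=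
  ((Finset.range w.length).filter
    (fun i => i ≠ j + 1 ∧ lineHitsH m n w (ptX w (j+1)) (ptY w (j+1)) i)).card

/-- The number of vertical steps of the path, other than the vertical step ending at the
outer vertex `p` (indexed by `j`), met by the line of slope `n/m` through `p`. -/
noncomputable def kV (m n : ℕ) (w : List Bool) (j : ℕ) : ℕ :=
  ((Finset.range w.length).filter
    (fun i => i ≠ j ∧ lineHitsV m n w (ptX w (j+1)) (ptY w (j+1)) i)).card

/-- `k₁(p)`: the number of vertical steps occurring after the outer vertex `p`
(indexed by `j`) met by the line of slope `n/m` through `p`. -/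
noncomputable def k1 (m n : ℕ) (w : List Bool) (j : ℕ) : ℕ :=
  ((Finset.range w.length).filter
    (fun i => j < i ∧ lineHitsV m n w (ptX w (j+1)) (ptY w (j+1)) i)).card

/-- `k₂(p)`: the number of horizontal steps occurring before the outer vertex `p`
(indexed by `j`) met by the line of slope `n/m` through `p`. -/
noncomputable def k2 (m n : ℕ) (w : List Bool) (j : ℕ) : ℕ :=
  ((Finset.range w.length).filter
    (fun i => i ≤ j ∧ lineHitsH m n w (ptX w (j+1)) (ptY w (j+1)) i)).card

/-- The insertion map `γ ↦ γ*`: insert one horizontal step immediately after each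
vertical step. -/
def star : List Bool → List Bool
  | [] => []
  | true :: w => true :: false :: star w
  | false :: w => false :: star w

/-- The index in `γ*` of the step corresponding to the step of index `i` in `γ`. -/
def starIdx (w : List Bool) (i : ℕ) : ℕ := i + (w.take i).count true

/-- A Dyck path is rugged if every vertical step is immediately followed by a
horizontal step. -/
def Rugged (w : List Bool) : Prop :=
  ∀ i, w[i]? = some true → w[i+1]? = some false


/-! ### Auxiliary lemmas -/

section Aux

lemma star_nil' : star [] = [] := rfl
lemma star_cons_true (t : List Bool) : star (true :: t) = true :: false :: star t := rfl
lemma star_cons_false (t : List Bool) : star (false :: t) = false :: star t := rfl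

lemma count_add_length (l : List Bool) : l.count false + l.count true = l.length := by
  induction l with
  | nil => rfl
  | cons b t ih => cases b <;> simp [List.count_cons] <;> omega

lemma count_true_star (w : List Bool) : (star w).count true = w.count true := by
  induction w with
  | nil => rfl
  | cons b t ih =>
    cases b <;> simp [star_cons_true, star_cons_false, List.count_cons, ih]

lemma count_false_star (w : List Bool) :
    (star w).count false = w.count false + w.count true := by
  induction w with
  | nil => rfl
  | cons b t ih =>
    have := count_add_length t
    cases b <;> simp [star_cons_true, star_cons_false, List.count_cons, ih] <;> omega

lemma starIdx_zero (w : List Bool) : starIdx w 0 = 0 := by simp [starIdx]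

lemma starIdx_cons_false (t : List Bool) (i : ℕ) :
    starIdx (false :: t) (i+1) = starIdx t i + 1 := by
  simp [starIdx, List.count_cons]; omega

lemma starIdx_cons_true (t : List Bool) (i : ℕ) :
    starIdx (true :: t) (i+1) = starIdx t i + 2 := by
  simp [starIdx, List.count_cons]; omega

lemma starIdx_mono (w : List Bool) {i j : ℕ} (h : i ≤ j) : starIdx w i ≤ starIdx w j := by
  have hc : (w.take i).count true ≤ (w.take j).count true :=
    ((List.take_prefix_take_left (l := w) h).sublist).count_le _
  unfold starIdx; omega

lemma starIdx_strictMono (w : List Bool) {i j : ℕ} (h : i < j) :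
    starIdx w i < starIdx w j := by
  have hc : (w.take i).count true ≤ (w.take j).count true :=
    ((List.take_prefix_take_left (l := w) (Nat.le_of_lt h)).sublist).count_le _
  unfold starIdx; omega

lemma get?_star_starIdx (w : List Bool) (i : ℕ) :
    (star w)[(starIdx w i)]? = w[i]? := by
  induction w generalizing i with
  | nil => simp [star_nil', starIdx]
  | cons b t ih =>
    have ih' : ∀ i, (star t)[starIdx t i]? = t[i]? := by
      simpa using ih
    cases b <;> cases i <;>
      simp [star_cons_true, star_cons_false, starIdx_zero, starIdx_cons_false,
        starIdx_cons_true, ih']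

lemma get?_star_inserted (w : List Bool) (i : ℕ) (h : w[i]? = some true) :
    (star w)[(starIdx w i + 1)]? = some false := by
  induction w generalizing i with
  | nil => simp at h
  | cons b t ih =>
    cases b <;> cases i <;>
      simp_all [star_cons_true, star_cons_false, starIdx_zero, starIdx_cons_false,
        starIdx_cons_true, ih]

lemma starIdx_succ_of_true (w : List Bool) (i : ℕ) (h : w[i]? = some true) :
    starIdx w (i+1) = starIdx w i + 2 := by
  have h' : w[i]? = some true := h
  have ht : w.take (i+1) = w.take i ++ [true] := by rw [List.take_succ, h']; rfl
  simp [starIdx, ht, List.count_append]; omega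

lemma star_classify (w : List Bool) (k : ℕ) (hk : k < (star w).length) :
    (∃ i, k = starIdx w i) ∨ (∃ i, w[i]? = some true ∧ k = starIdx w i + 1) := by
  induction w generalizing k with
  | nil => simp [star_nil'] at hk
  | cons b t ih =>
    cases b with
    | false =>
      cases k with
      | zero => exact Or.inl ⟨0, (starIdx_zero _).symm⟩
      | succ k =>
        have hk' : k < (star t).length := by simpa [star_cons_false] using hk
        rcases ih k hk' with ⟨i, hi⟩ | ⟨i, hti, hi⟩
        · exact Or.inl ⟨i + 1, by rw [starIdx_cons_false]; omega⟩
        · exact Or.inr ⟨i + 1, by simpa using hti, by rw [starIdx_cons_false]; omega⟩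
    | true =>
      match k with
      | 0 => exact Or.inl ⟨0, (starIdx_zero _).symm⟩
      | 1 => exact Or.inr ⟨0, by simp, by rw [starIdx_zero]⟩
      | (k+2) =>
        have hk' : k < (star t).length := by
          simp [star_cons_true] at hk; omega
        rcases ih k hk' with ⟨i, hi⟩ | ⟨i, hti, hi⟩
        · exact Or.inl ⟨i + 1, by rw [starIdx_cons_true]; omega⟩
        · exact Or.inr ⟨i + 1, by simpa using hti, by rw [starIdx_cons_true]; omega⟩

lemma rugged_star (w : List Bool) : ∀ i, (star w)[i]? = some true →
    (star w)[(i+1)]? = some false := by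
  induction w with
  | nil => intro i h; simp [star_nil'] at h
  | cons b t ih =>
    intro i h
    cases b with
    | false =>
      cases i with
      | zero => simp [star_cons_false] at h
      | succ i => simpa [star_cons_false] using ih i (by simpa [star_cons_false] using h)
    | true =>
      match i with
      | 0 => simp [star_cons_true]
      | 1 => simp [star_cons_true] at h
      | (i+2) => simpa [star_cons_true] using ih i (by simpa [star_cons_true] using h)

lemma take_succ_of_get? (v : List Bool) (i : ℕ) (b : Bool) (h : v[i]? = some b) :
    v.take (i+1) = v.take i ++ [b] := by
  have h' : v[i]? = some b := h
  rw [List.take_succ, h']; rfl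

lemma ptX_succ_true (v : List Bool) (i : ℕ) (h : v[i]? = some true) :
    ptX v (i+1) = ptX v i := by
  simp [ptX, take_succ_of_get? v i true h, List.count_append]

lemma ptY_succ_true (v : List Bool) (i : ℕ) (h : v[i]? = some true) :
    ptY v (i+1) = ptY v i + 1 := by
  simp [ptY, take_succ_of_get? v i true h, List.count_append]

lemma ptX_bound (v : List Bool) (k : ℕ) (h : v[k]? = some false) :
    ptX v k + 1 ≤ (v.count false : ℤ) := by
  have h1 : (v.take (k+1)).count false = (v.take k).count false + 1 := by
    simp [take_succ_of_get? v k false h, List.count_append]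
  have h2 : (v.take (k+1)).count false ≤ v.count false :=
    (List.take_sublist _ _).count_le _
  simp only [ptX]; omega

lemma ptX_add_ptY (v : List Bool) (k : ℕ) (hk : k ≤ v.length) :
    ptX v k + ptY v k = (k : ℤ) := by
  have := count_add_length (v.take k)
  have h2 : (v.take k).length = k := by simp [hk]
  simp only [ptX, ptY]; omega

lemma lt_length_of_get? {v : List Bool} {j : ℕ} {b : Bool} (h : v[j]? = some b) :
    j < v.length :=
  (List.getElem?_eq_some_iff.1 h).1

lemma mem_outerIdx {v : List Bool} {j : ℕ} :
    j ∈ outerIdx v ↔ v[j]? = some true ∧ v[(j+1)]? = some false := by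
  simp only [outerIdx, Finset.mem_filter, Finset.mem_range]
  constructor
  · rintro ⟨-, h⟩; exact h
  · rintro ⟨h1, h2⟩; exact ⟨lt_length_of_get? h1, h1, h2⟩

lemma lineHitsV_iff (m n : ℕ) (v : List Bool) (i j : ℕ) :
    lineHitsV m n v (ptX v i) (ptY v i) j ↔ (v[j]? = some true ∧ Cond1A m n v i j) :=
  Iff.rfl

end Aux

/-- `Σ_{p ∈ V(γ*)} k₁(p) = |H₁(γ*) \ ι(O(γ))|`. -/
theorem statement14 (m n : ℕ) (hm : 0 < m) (hn : 0 < n) (h : Nat.Coprime m n)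
    (w : List Bool) (hw : IsDyck m n w) :
    ∑ p ∈ Vset (m + n) n (star w), k1 (m + n) n (star w) p =
      ((H1pairs (m + n) n (star w)) \
        ((Opairs w).image (fun ij => (starIdx w ij.1, starIdx w ij.2)))).card := by
  classical
  obtain ⟨hwf, hwt, -⟩ := hw
  set v := star w with hv
  set M := m + n with hM
  have hMpos : 0 < M := by omega
  have hvfalse : v.count false = M := by
    rw [hv, count_false_star, hwf, hwt]
  have hcop : IsCoprime (M : ℤ) (n : ℤ) := by
    rw [Int.isCoprime_iff_gcd_eq_one, Int.gcd_natCast_natCast]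
    exact (Nat.coprime_add_self_left).2 h
  -- Step 1: k1 vanishes at maximal outer vertices
  have hk1max : ∀ j ∈ outerIdx v, j ∉ Vset M n v → k1 M n v j = 0 := by
    intro j hj hjV
    have hmax : ∀ j' ∈ outerIdx v, diagDist M n v j' ≤ diagDist M n v j := by
      intro j' hj'
      by_contra hlt
      exact hjV (Finset.mem_filter.2 ⟨hj, j', hj', by omega⟩)
    rw [k1, Finset.card_eq_zero, Finset.filter_eq_empty_iff]
    rintro i - ⟨hji, hti, y, hy1, hy2, heq⟩
    have hgj := mem_outerIdx.1 hj
    -- i is an outer vertex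
    have hia : v[(i+1)]? = some false := by
      rw [hv] at hti ⊢; exact rugged_star w i hti
    have hiO : i ∈ outerIdx v := mem_outerIdx.2 ⟨hti, hia⟩
    -- real inequality gives diagDist j ≤ diagDist i
    have hprod : (M : ℝ) * y ≤ (M : ℝ) * ((ptY v i : ℝ) + 1) :=
      mul_le_mul_of_nonneg_left hy2 (by positivity)
    have hr : (M : ℝ) * (ptY v (j+1) : ℝ) - (n : ℝ) * (ptX v (j+1) : ℝ) ≤
        (M : ℝ) * (ptY v i : ℝ) + (M : ℝ) - (n : ℝ) * (ptX v i : ℝ) := by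
      nlinarith [heq, hprod]
    have hz : (M : ℤ) * ptY v (j+1) - (n : ℤ) * ptX v (j+1) ≤
        (M : ℤ) * ptY v i + (M : ℤ) - (n : ℤ) * ptX v i := by exact_mod_cast hr
    have hXi : ptX v (i+1) = ptX v i := ptX_succ_true v i hti
    have hYi : ptY v (i+1) = ptY v i + 1 := ptY_succ_true v i hti
    have hDji : diagDist M n v j ≤ diagDist M n v i := by
      simp only [diagDist, hXi, hYi]; linarith
    have hDij : diagDist M n v i ≤ diagDist M n v j := hmax i hiO
    have hE : (M : ℤ) * (ptY v (i+1) - ptY v (j+1)) = (n : ℤ) * (ptX v (i+1) - ptX v (j+1)) := by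
      have : diagDist M n v i = diagDist M n v j := le_antisymm hDij hDji
      simp only [diagDist] at this
      linarith
    have hdvd : (M : ℤ) ∣ (ptX v (i+1) - ptX v (j+1)) := by
      refine hcop.dvd_of_dvd_mul_left ⟨ptY v (i+1) - ptY v (j+1), ?_⟩
      linarith
    have hbi : ptX v (i+1) + 1 ≤ (M : ℤ) := by
      have := ptX_bound v (i+1) hia
      rwa [hvfalse] at this
    have hbj : ptX v (j+1) + 1 ≤ (M : ℤ) := by
      have := ptX_bound v (j+1) hgj.2
      rwa [hvfalse] at this
    have hnn_i : (0 : ℤ) ≤ ptX v (i+1) := Int.natCast_nonneg _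
    have hnn_j : (0 : ℤ) ≤ ptX v (j+1) := Int.natCast_nonneg _
    have hx0 : ptX v (i+1) - ptX v (j+1) = 0 :=
      Int.eq_zero_of_abs_lt_dvd hdvd (by rw [abs_lt]; constructor <;> omega)
    have hy0 : ptY v (i+1) = ptY v (j+1) := by
      have hM0 : (M : ℤ) ≠ 0 := by exact_mod_cast hMpos.ne'
      have := hE
      rw [hx0, mul_zero, mul_eq_zero] at this
      rcases this with h' | h'
      · exact absurd h' hM0
      · linarith
    have hsumi : ptX v (i+1) + ptY v (i+1) = ((i+1 : ℕ) : ℤ) :=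
      ptX_add_ptY v (i+1) (Nat.le_of_lt (lt_length_of_get? hia))
    have hsumj : ptX v (j+1) + ptY v (j+1) = ((j+1 : ℕ) : ℤ) :=
      ptX_add_ptY v (j+1) (Nat.le_of_lt (lt_length_of_get? hgj.2))
    have : (i : ℤ) = (j : ℤ) := by push_cast at hsumi hsumj; omega
    have : i = j := by exact_mod_cast this
    omega
  -- Step 2: sum over Vset equals sum over outerIdx
  have hsum : ∑ p ∈ Vset M n v, k1 M n v p = ∑ p ∈ outerIdx v, k1 M n v p := by
    rw [← Finset.sum_filter_add_sum_filter_not (outerIdx v)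
      (fun j => ∃ j' ∈ outerIdx v, diagDist M n v j < diagDist M n v j') (k1 M n v)]
    have h0 : ∑ p ∈ (outerIdx v).filter
        (fun j => ¬ ∃ j' ∈ outerIdx v, diagDist M n v j < diagDist M n v j'), k1 M n v p = 0 := by
      refine Finset.sum_eq_zero fun j hj => ?_
      rw [Finset.mem_filter] at hj
      refine hk1max j hj.1 fun hjV => ?_
      exact hj.2 (Finset.mem_filter.1 hjV).2
    rw [Vset]
    omega
  -- Step 3: identify the RHS set with a disjoint union over outer vertices
  have hkey : (H1pairs M n v) \ ((Opairs w).image fun ij => (starIdx w ij.1, starIdx w ij.2)) =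
      (outerIdx v).biUnion (fun j => ((Finset.range v.length).filter
        (fun i => j < i ∧ lineHitsV M n v (ptX v (j+1)) (ptY v (j+1)) i)).image
          (fun i => (j+1, i))) := by
    ext ⟨a, b⟩
    simp only [Finset.mem_sdiff, Finset.mem_biUnion, Finset.mem_image, Finset.mem_filter,
      H1pairs, Opairs, Finset.mem_product, Finset.mem_range, Prod.mk.injEq, Prod.exists,
      not_exists, not_and]
    constructor
    · rintro ⟨⟨⟨⟨ha, hb⟩, hab, hga, hgb⟩, hcond⟩, him⟩
      rcases star_classify w a (by rwa [← hv]) with ⟨i₀, rfl⟩ | ⟨q, hq, rfl⟩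
      · exfalso
        rcases star_classify w b (by rwa [← hv]) with ⟨j₀, rfl⟩ | ⟨q, hq, rfl⟩
        · have hga' : w[i₀]? = some false := by
            rw [hv, get?_star_starIdx] at hga; exact hga
          have hgb' : w[j₀]? = some true := by
            rw [hv, get?_star_starIdx] at hgb; exact hgb
          have hij : i₀ < j₀ := by
            by_contra hle
            exact absurd (starIdx_mono w (by omega : j₀ ≤ i₀)) (by omega)
          exact him i₀ j₀ ⟨⟨lt_length_of_get? hga', lt_length_of_get? hgb'⟩,
            hij, hga', hgb'⟩ rfl rfl
        · rw [hv, get?_star_inserted w q hq] at hgb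
          simp at hgb
      · refine ⟨starIdx w q, ?_, b, ⟨hb, ?_, ?_⟩, rfl, rfl⟩
        · refine mem_outerIdx.2 ⟨?_, hga⟩
          rw [hv, get?_star_starIdx]; exact hq
        · omega
        · exact ⟨hgb, hcond⟩
    · rintro ⟨j, hj, i, ⟨hi, hji, hgi, hcond⟩, rfl, rfl⟩
      have hgj := mem_outerIdx.1 hj
      have hab : j + 1 < i := by
        rcases Nat.lt_or_ge (j+1) i with h' | h'
        · exact h'
        · exfalso
          have : i = j + 1 := by omega
          rw [this, hgj.2] at hgi
          simp at hgi
      refine ⟨⟨⟨⟨lt_length_of_get? hgj.2, hi⟩, hab, hgj.2, hgi⟩, hcond⟩, ?_⟩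
      rintro i₀ j₀ ⟨⟨hi₀, hj₀⟩, -, hgi₀, -⟩ heq1 heq2
      -- j is an original vertical step
      rcases star_classify w j (lt_length_of_get? (by rw [← hv]; exact hgj.1))
        with ⟨q, hqe⟩ | ⟨q, hq, hqe⟩
      · have hq : w[q]? = some true := by
          have := hgj.1
          rw [hqe, hv, get?_star_starIdx] at this; exact this
        rw [hqe] at heq1
        -- starIdx w i₀ = starIdx w q + 1 is impossible
        rcases Nat.lt_or_ge q i₀ with h' | h'
        · have : starIdx w q + 2 ≤ starIdx w i₀ := by
            rw [← starIdx_succ_of_true w q hq]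
            exact starIdx_mono w (by omega)
          omega
        · have : starIdx w i₀ ≤ starIdx w q := starIdx_mono w h'
          omega
      · have := hgj.1
        rw [hqe, hv, get?_star_inserted w q hq] at this
        exact absurd this (by simp)
  rw [hsum, hkey, Finset.card_biUnion]
  · refine Finset.sum_congr rfl fun j hj => ?_
    rw [Finset.card_image_of_injective _ (fun x y hxy => by
      simpa using hxy)]
    rfl
  · intro x hx y hy hxy
    simp only [Finset.disjoint_left, Finset.mem_image, Finset.mem_filter]
    rintro ⟨a, b⟩ ⟨i, -, hi⟩ ⟨i', -, hi'⟩
    apply hxy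
    have h1 : x + 1 = a := (Prod.ext_iff.1 hi).1
    have h2 : y + 1 = a := (Prod.ext_iff.1 hi').1
    omega
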